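/- If S is a Σ_uc-admissible supervisor with S||G cc-simulated by R via Φ, then S||G is simulated by 𝒜(E(Φ))||G, where E(Φ) = { θ_y : y ∈ Y } and θ_y = { (x,z) : ((y,x),z) ∈ Φ, (y,x) reachable in S||G }. Hence any solution to the similarity control problem with required events is dominated (w.r.t. simulation) by a supervisor of the form 𝒜(E). -/
import Mathlib


/-- An automaton with state type `S` and event alphabet `E`:
a transition relation and a set of initial states. -/
structure Automaton (S : Type) (E : Type) where
  trans : S → E → S → Prop
  init : Set S

/-- Extension of the transition relation to finite event sequences. -/
def TransSeq {S E : Type} (G : Automaton S E) : S → List E → S → Prop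
  | x, [], x' => x = x'
  | x, σ :: s, x'' => ∃ x', G.trans x σ x' ∧ TransSeq G x' s x''

/-- `x` is `s`-reachable in `G`. -/
def ReachSeq {S E : Type} (G : Automaton S E) (s : List E) (x : S) : Prop :=
  ∃ x₀ ∈ G.init, TransSeq G x₀ s x

/-- `x` is reachable in `G`. -/
def Reachable {S E : Type} (G : Automaton S E) (x : S) : Prop :=
  ∃ s : List E, ReachSeq G s x

/-- The language of an automaton: all event sequences executable from some initial state. -/
def Lang {S E : Type} (G : Automaton S E) : Set (List E) :=
  {s | ∃ x, ReachSeq G s x}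

/-- `Φ` is a simulation from `G` to `R`. -/
def IsSimulation {X Z E : Type} (G : Automaton X E) (R : Automaton Z E)
    (Φ : Set (X × Z)) : Prop :=
  (∀ x₀ ∈ G.init, ∃ z₀ ∈ R.init, (x₀, z₀) ∈ Φ) ∧
  (∀ p ∈ Φ, ∀ (σ : E), ∀ x', G.trans p.1 σ x' →
    ∃ z', R.trans p.2 σ z' ∧ (x', z') ∈ Φ)

/-- `G` is simulated by `R` (`G ⊑ R`). -/
def Simulated {X Z E : Type} (G : Automaton X E) (R : Automaton Z E) : Prop :=
  ∃ Φ, IsSimulation G R Φ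

/-- `Φ` is a covariant-contravariant simulation from `G` to `R`, with required events `Sr`. -/
def IsCCSimulation {X Z E : Type} (Sr : Set E) (G : Automaton X E) (R : Automaton Z E)
    (Φ : Set (X × Z)) : Prop :=
  IsSimulation G R Φ ∧
  (∀ p ∈ Φ, ∀ σ ∈ Sr, ∀ z', R.trans p.2 σ z' →
    ∃ x', G.trans p.1 σ x' ∧ (x', z') ∈ Φ)

/-- `G` is cc-simulated by `R` (`G ⊑_cc R`). -/
def CCSimulated {X Z E : Type} (Sr : Set E) (G : Automaton X E) (R : Automaton Z E) : Prop :=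
  ∃ Φ, IsCCSimulation Sr G R Φ

/-- `Φ` is a bisimulation from `G` to `R`: both `Φ` and its inverse are simulations. -/
def IsBisimulation {X Z E : Type} (G : Automaton X E) (R : Automaton Z E)
    (Φ : Set (X × Z)) : Prop :=
  IsSimulation G R Φ ∧ IsSimulation R G {p | (p.2, p.1) ∈ Φ}

/-- `G` is bisimilar to `R` (`G ≃ R`). -/
def Bisimilar {X Z E : Type} (G : Automaton X E) (R : Automaton Z E) : Prop :=
  ∃ Φ, IsBisimulation G R Φ

/-- `Φ` is a `Σ_uc`-simulation from `G` to `R`. -/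
def IsUcSimulation {X Z E : Type} (Suc : Set E) (G : Automaton X E) (R : Automaton Z E)
    (Φ : Set (X × Z)) : Prop :=
  (∀ x₀ ∈ G.init, ∃ z₀ ∈ R.init, (x₀, z₀) ∈ Φ) ∧
  (∀ p ∈ Φ, ∀ σ ∈ Suc, ∀ x', G.trans p.1 σ x' →
    ∃ z', R.trans p.2 σ z' ∧ (x', z') ∈ Φ)

/-- `Φ` is a `Σ_ucr`-simulation from `G` to `R`:
(initial state), (Σ_uc-forward) and (Σ_r-backward). -/
def IsUcrSimulation {X Z E : Type} (Suc Sr : Set E) (G : Automaton X E) (R : Automaton Z E)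
    (Φ : Set (X × Z)) : Prop :=
  IsUcSimulation Suc G R Φ ∧
  (∀ p ∈ Φ, ∀ σ ∈ Sr, ∀ z', R.trans p.2 σ z' →
    ∃ x', G.trans p.1 σ x' ∧ (x', z') ∈ Φ)

/-- Synchronous composition `S || G`. -/
def Sync {Y X E : Type} (S : Automaton Y E) (G : Automaton X E) : Automaton (Y × X) E where
  trans p σ q := S.trans p.1 σ q.1 ∧ G.trans p.2 σ q.2
  init := S.init ×ˢ G.init

/-- `S` is `Σ_uc`-admissible with respect to `G`. -/
def Admissible {Y X E : Type} (Suc : Set E) (S : Automaton Y E) (G : Automaton X E) : Prop :=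
  ∀ p : Y × X, Reachable (Sync S G) p → ∀ σ ∈ Suc,
    (∃ x', G.trans p.2 σ x') → ∃ q, (Sync S G).trans p σ q

/-- `match_{G,R}(W, σ, W')`. -/
def MatchW {X Z E : Type} (G : Automaton X E) (R : Automaton Z E)
    (W : Set (X × Z)) (σ : E) (W' : Set (X × Z)) : Prop :=
  ∀ p ∈ W, ∀ x', G.trans p.1 σ x' →
    ∃ z', R.trans p.2 σ z' ∧ (x', z') ∈ W'

/-- `Ecs` is a `Σ_ucr`-controllability set from `G` to `R`. -/
def ControlSet {X Z E : Type} (Suc Sr : Set E) (G : Automaton X E) (R : Automaton Z E)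
    (Ecs : Set (Set (X × Z))) : Prop :=
  (∃ W₀ ∈ Ecs, ∀ x₀ ∈ G.init, ∃ z₀ ∈ R.init, (x₀, z₀) ∈ W₀) ∧
  (∀ W ∈ Ecs, ∀ σ ∈ Suc, ∃ W' ∈ Ecs, MatchW G R W σ W') ∧
  (∀ W ∈ Ecs, ∀ p ∈ W, ∀ σ ∈ Sr, ∀ z', R.trans p.2 σ z' →
    ∃ x', ∃ W' ∈ Ecs, G.trans p.1 σ x' ∧ (x', z') ∈ W' ∧ MatchW G R W σ W')

/-- The downward closure `P(E) = ⋃_{W ∈ E} 𝒫(W)`. -/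
def PE {X Z : Type} (Ecs : Set (Set (X × Z))) : Set (Set (X × Z)) :=
  {W | ∃ W' ∈ Ecs, W ⊆ W'}

/-- `⋃_{(x,z) ∈ W} {x' : x →σ x'} × {z' : z →σ z'}`. -/
def SuccSet {X Z E : Type} (G : Automaton X E) (R : Automaton Z E)
    (W : Set (X × Z)) (σ : E) : Set (X × Z) :=
  {q | ∃ p ∈ W, G.trans p.1 σ q.1 ∧ R.trans p.2 σ q.2}

/-- The automaton `𝒜(E)` induced by a `Σ_ucr`-controllability set `Ecs`.
Its states are the members of `P(Ecs)` (enforced in the transition relation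
and initial-state set). -/
def AutA {X Z E : Type} (G : Automaton X E) (R : Automaton Z E)
    (Ecs : Set (Set (X × Z))) : Automaton (Set (X × Z)) E where
  trans W σ W' :=
    W ∈ PE Ecs ∧ W' ∈ PE Ecs ∧
    (∃ p ∈ W, ∃ q ∈ W', G.trans p.1 σ q.1 ∧ R.trans p.2 σ q.2) ∧
    MatchW G R W σ W' ∧ W' ⊆ SuccSet G R W σ
  init := {W₀ | W₀ ∈ PE Ecs ∧ W₀ ⊆ G.init ×ˢ R.init ∧
    ∀ x₀ ∈ G.init, ∃ z₀ ∈ R.init, (x₀, z₀) ∈ W₀}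

/-- A deterministic automaton: a single initial state, and at most one
`σ`-successor of each state. -/
def Deterministic {S E : Type} (G : Automaton S E) : Prop :=
  (∃ x₀, G.init = {x₀}) ∧
  ∀ x (σ : E) x₁ x₂, G.trans x σ x₁ → G.trans x σ x₂ → x₁ = x₂

/-- `Φ` is uniform with respect to `Sr`. -/
def UniformRel {X Z E : Type} (Sr : Set E) (G : Automaton X E) (R : Automaton Z E)
    (Φ : Set (X × Z)) : Prop :=
  ∀ (s : List E), ∀ p₁ ∈ Φ, ∀ p₂ ∈ Φ,
    ReachSeq G s p₁.1 → ReachSeq G s p₂.1 → ReachSeq R s p₁.2 → ReachSeq R s p₂.2 →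
    ∀ σ ∈ Sr, (∃ z', R.trans p₁.2 σ z') → ∀ x₂', G.trans p₂.1 σ x₂' →
      ∃ z₂', R.trans p₂.2 σ z₂' ∧ (x₂', z₂') ∈ Φ

/-- The fixpoint operator `F_{(G,R)}`. -/
def Fop {X Z E : Type} (Suc Sr : Set E) (G : Automaton X E) (R : Automaton Z E)
    (Ecs : Set (Set (X × Z))) : Set (Set (X × Z)) :=
  {W | W ∈ Ecs ∧
    (∀ σ ∈ Suc, ∃ W' ∈ Ecs, MatchW G R W σ W') ∧
    (∀ p ∈ W, ∀ σ ∈ Sr, ∀ z', R.trans p.2 σ z' →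
      ∃ x', ∃ W' ∈ Ecs, G.trans p.1 σ x' ∧ (x', z') ∈ W' ∧ MatchW G R W σ W')}

/-- The greatest fixpoint `E↑` of `F_{(G,R)}`: the union of all post-fixpoints. -/
def Egfp {X Z E : Type} (Suc Sr : Set E) (G : Automaton X E) (R : Automaton Z E) :
    Set (Set (X × Z)) :=
  ⋃₀ {Ecs | Ecs ⊆ Fop Suc Sr G R Ecs}

lemma transSeq_snoc {S E : Type} (G : Automaton S E) (σ : E) :
    ∀ (s : List E) (a b c : S), TransSeq G a s b → G.trans b σ c →
      TransSeq G a (s ++ [σ]) c := by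
  intro s
  induction s with
  | nil => intro a b c h hb; cases h; exact ⟨c, hb, rfl⟩
  | cons τ t ih =>
    rintro a b c ⟨a', ha', ht⟩ hb
    exact ⟨a', ha', ih a' b c ht hb⟩

lemma reachable_step {S E : Type} (G : Automaton S E) {a b : S} {σ : E}
    (h : Reachable G a) (hb : G.trans a σ b) : Reachable G b := by
  obtain ⟨s, x₀, hx₀, ht⟩ := h
  exact ⟨s ++ [σ], x₀, hx₀, transSeq_snoc G σ s x₀ a b ht hb⟩

/-- every solution `S` is dominated (w.r.t. simulation) by the
supervisor `𝒜(E(Φ))`. -/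
theorem solution_dominated_by_autA {E X Z Y : Type} (Suc Sr : Set E)
    (G : Automaton X E) (R : Automaton Z E) (S : Automaton Y E)
    (hY : S.init.Nonempty)
    (Φ : Set ((Y × X) × Z))
    (hS : Admissible Suc S G)
    (hΦ : IsCCSimulation Sr (Sync S G) R Φ) :
    Simulated (Sync S G)
      (Sync (AutA G R
        {W | ∃ y : Y, W = {p : X × Z |
          ((y, p.1), p.2) ∈ Φ ∧ Reachable (Sync S G) (y, p.1)}}) G) := by
  obtain ⟨⟨hinit, hfwd⟩, _hback⟩ := hΦ
  set θ : Y → Set (X × Z) :=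
    fun y => {p : X × Z | ((y, p.1), p.2) ∈ Φ ∧ Reachable (Sync S G) (y, p.1)} with hθ
  set Ecs : Set (Set (X × Z)) := {W | ∃ y : Y, W = θ y} with hEcs
  refine ⟨{q : (Y × X) × (Set (X × Z) × X) |
      q.2.2 = q.1.2 ∧ Reachable (Sync S G) q.1 ∧ q.2.1 ⊆ θ q.1.1 ∧
      ∃ z, (q.1.2, z) ∈ q.2.1}, ?_, ?_⟩
  · rintro ⟨y₀, x₀⟩ ⟨hy₀, hx₀⟩
    refine ⟨(θ y₀ ∩ (G.init ×ˢ R.init), x₀), ?_, rfl, ⟨[], (y₀, x₀), ⟨hy₀, hx₀⟩, rfl⟩,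
      Set.inter_subset_left, ?_⟩
    · refine ⟨⟨⟨θ y₀, ⟨y₀, rfl⟩, Set.inter_subset_left⟩, Set.inter_subset_right, ?_⟩, hx₀⟩
      intro x hx
      obtain ⟨z₀, hz₀, hΦ₀⟩ := hinit (y₀, x) ⟨hy₀, hx⟩
      exact ⟨z₀, hz₀, ⟨hΦ₀, ⟨[], (y₀, x), ⟨hy₀, hx⟩, rfl⟩⟩, hx, hz₀⟩
    · obtain ⟨z₀, hz₀, hΦ₀⟩ := hinit (y₀, x₀) ⟨hy₀, hx₀⟩
      exact ⟨z₀, ⟨hΦ₀, ⟨[], (y₀, x₀), ⟨hy₀, hx₀⟩, rfl⟩⟩, hx₀, hz₀⟩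
  · rintro ⟨⟨y, x⟩, W, x₂⟩ ⟨hx₂, hreach, hWθ, z, hzW⟩ σ ⟨y', x'⟩ ⟨hSy, hGx⟩
    simp only at hx₂ hWθ hzW hSy hGx ⊢
    subst hx₂
    have hreach' : Reachable (Sync S G) (y', x') :=
      reachable_step _ hreach ⟨hSy, hGx⟩
    set W' : Set (X × Z) := SuccSet G R W σ ∩ θ y' with hW'
    -- key: matching property
    have hmatch : MatchW G R W σ W' := by
      rintro ⟨x₁, z₁⟩ h₁ x₁' hx₁'
      obtain ⟨hΦ₁, hr₁⟩ := hWθ h₁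
      obtain ⟨z₁', hz₁', hΦ₁'⟩ :=
        hfwd ((y, x₁), z₁) hΦ₁ σ (y', x₁') ⟨hSy, hx₁'⟩
      exact ⟨z₁', hz₁', ⟨⟨(x₁, z₁), h₁, hx₁', hz₁'⟩,
        hΦ₁', reachable_step _ hr₁ ⟨hSy, hx₁'⟩⟩⟩
    obtain ⟨z', hz', hpair'⟩ := hmatch (x₂, z) hzW x' hGx
    refine ⟨(W', x'), ⟨⟨⟨θ y, ⟨y, rfl⟩, hWθ⟩, ⟨θ y', ⟨y', rfl⟩, Set.inter_subset_right⟩,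
      ⟨(x₂, z), hzW, (x', z'), hpair', hGx, hz'⟩, hmatch, Set.inter_subset_left⟩, hGx⟩,
      rfl, hreach', Set.inter_subset_right, z', hpair'⟩
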